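/- arXiv:0707.4399 — 2 statements merged into one kernel-verified Lean document; each statement's English description precedes it below -/
import Mathlib

section
/- For every n ≥ 1, the map sending a permutation σ of {1,…,n} to its step matrix face is injective; consequently there are exactly n! step matrix faces. -/
/-- Split a list into maximal runs with respect to the relation `r`. -/
def splitRuns {α : Type*} (r : α → α → Bool) : List α → List (List α)
  | [] => []
  | [x] => [[x]]
  | x :: y :: rest =>
    match splitRuns r (y :: rest) with
    | [] => [[x]]
    | s :: ss => if r x y then (x :: s) :: ss else [x] :: s :: ss

/-- The word `σ(1) σ(2) … σ(n)` of a permutation of `{1,…,n}`. -/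
def permWord (n : ℕ) (σ : Equiv.Perm (Fin n)) : List ℕ :=
  List.ofFn (fun i => (σ i : ℕ) + 1)

/-- A face: a pair of ordered partitions, each a list of blocks. -/
abbrev Face := List (Finset ℕ) × List (Finset ℕ)

/-- The step matrix face of a permutation: the maximal decreasing runs of its word
(as sets, in order of occurrence) paired with the maximal increasing runs. -/
def stepFace (n : ℕ) (σ : Equiv.Perm (Fin n)) : Face :=
  ((splitRuns (fun a b => decide (b < a)) (permWord n σ)).map List.toFinset,
   (splitRuns (fun a b => decide (a < b)) (permWord n σ)).map List.toFinset)

/-- `π` is an ordered partition of `{1,…,n}`: a finite sequence of nonempty pairwise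
disjoint subsets whose union is `{1,…,n}`. -/
def IsOrderedPartition (n : ℕ) (π : List (Finset ℕ)) : Prop :=
  (∀ b ∈ π, b.Nonempty) ∧ π.Pairwise Disjoint ∧ π.foldr (· ∪ ·) ∅ = Finset.Icc 1 n

/-- The `M`-shift at (0-based) index `j`: remove `M` from block `j` and adjoin it to
block `j+1`. -/
def blockShift (π : List (Finset ℕ)) (j : ℕ) (M : Finset ℕ) : List (Finset ℕ) :=
  (π.set j (π.getD j ∅ \ M)).set (j + 1) (π.getD (j + 1) ∅ ∪ M)

/-- `M` is an admissible subset of the `j`-th block of `π` with respect to `μ`: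
`M` is a nonempty proper subset of `π_j` (with `j` not the last index),
`min M > max π_{j+1}`, and if `min M ∈ μ_{k₀}` then `π_{j+1}` is disjoint from
`μ_{k₀} ∪ … ∪ μ_r`. -/
def Admissible (π μ : List (Finset ℕ)) (j : ℕ) (M : Finset ℕ) : Prop :=
  j + 1 < π.length ∧ M.Nonempty ∧ M ⊂ π.getD j ∅ ∧
    (∀ x ∈ M, ∀ y ∈ π.getD (j + 1) ∅, y < x) ∧
    ∃ k₀ < μ.length,
      (∃ m ∈ M, (∀ x ∈ M, m ≤ x) ∧ m ∈ μ.getD k₀ ∅) ∧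
      ∀ i, k₀ ≤ i → i < μ.length → π.getD (j + 1) ∅ ∩ μ.getD i ∅ = ∅

/-- A right shift of a face at index `j`: an admissible `M`-shift on the first
partition, admissibility taken with respect to the reverse of the second. -/
def RightShift (f g : Face) (j : ℕ) : Prop :=
  ∃ M, Admissible f.1 f.2.reverse j M ∧ g = (blockShift f.1 j M, f.2)

/-- A down shift of a face at index `j`: an admissible `M`-shift on the reverse of
the second partition, admissibility taken with respect to the first. -/
def DownShift (f g : Face) (j : ℕ) : Prop :=
  ∃ M, Admissible f.2.reverse f.1 j M ∧ g = (f.1, (blockShift f.2.reverse j M).reverse)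

/-- A sequence of shifts of the given kind, performed at strictly increasing indices,
all of which are at least `i`. -/
inductive ShiftSeq (step : Face → Face → ℕ → Prop) : ℕ → Face → Face → Prop
  | refl (i : ℕ) (f : Face) : ShiftSeq step i f f
  | cons (i j : ℕ) (f g h : Face) : i ≤ j → step f g j →
      ShiftSeq step (j + 1) g h → ShiftSeq step i f h

/-- `g` is a derived face of `f`: obtained by a sequence of right shifts at strictly
increasing indices followed by a sequence of down shifts at strictly increasing
indices. -/
def IsDerivedFace (f g : Face) : Prop :=
  ∃ m : Face, ShiftSeq RightShift 0 f m ∧ ShiftSeq DownShift 0 m g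

/-- The Saneblidze–Umble diagonal term set `Δ_n`: all derived faces of step matrix
faces of permutations of `{1,…,n}`. -/
def SUDiagonal (n : ℕ) : Set Face :=
  {f | ∃ σ : Equiv.Perm (Fin n), IsDerivedFace (stepFace n σ) f}

/-- An ordered partition is derived consecutive if for each `j`, the integer interval
`[min π_j, max π_j]` is contained in `π_1 ∪ … ∪ π_j`. -/
def DerivedConsecutive (π : List (Finset ℕ)) : Prop :=
  ∀ j < π.length, ∀ x : ℕ,
    (∃ a ∈ π.getD j ∅, a ≤ x) → (∃ b ∈ π.getD j ∅, x ≤ b) →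
    x ∈ (π.take (j + 1)).foldr (· ∪ ·) ∅

/-- The associahedron term set `K_n`: the faces of `Δ_n` in which both ordered
partitions are derived consecutive. -/
def AssocTerms (n : ℕ) : Set Face :=
  {f ∈ SUDiagonal n | DerivedConsecutive f.1 ∧ DerivedConsecutive f.2}

theorem splitRuns_flatten {α : Type*} (r : α → α → Bool) :
    ∀ l : List α, (splitRuns r l).flatten = l
  | [] => rfl
  | [x] => rfl
  | x :: y :: rest => by
    have ih := splitRuns_flatten r (y :: rest)
    rw [splitRuns]
    cases h : splitRuns r (y :: rest) with
    | nil => simp [h] at ih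
    | cons s ss =>
      rw [h] at ih
      by_cases hr : r x y = true
      · simp only [hr, if_true, List.flatten_cons] at *
        simp [← ih]
      · simp only [hr, if_false, Bool.false_eq_true, List.flatten_cons] at *
        simp [ih]

theorem splitRuns_ne_nil {α : Type*} (r : α → α → Bool) :
    ∀ l : List α, ∀ s ∈ splitRuns r l, s ≠ []
  | [] => by simp [splitRuns]
  | [x] => by simp [splitRuns]
  | x :: y :: rest => by
    have ih := splitRuns_ne_nil r (y :: rest)
    cases h : splitRuns r (y :: rest) with
    | nil => simp [splitRuns, h]
    | cons s ss =>
      rw [h] at ih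
      by_cases hr : r x y = true
      · simp only [splitRuns, h, if_pos hr]
        intro u hu
        simp only [List.mem_cons] at hu
        rcases hu with rfl | hu
        · exact List.cons_ne_nil _ _
        · exact ih u (by simp [hu])
      · simp only [splitRuns, h, if_neg hr]
        intro u hu
        simp only [List.mem_cons] at hu
        rcases hu with rfl | rfl | hu
        · exact List.cons_ne_nil _ _
        · exact ih _ (by simp)
        · exact ih u (by simp [hu])

theorem splitRuns_chain {α : Type*} (r : α → α → Bool) :
    ∀ l : List α, ∀ s ∈ splitRuns r l, s.Chain' (fun a b => r a b = true)
  | [] => by simp [splitRuns]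
  | [x] => by simp [splitRuns]; exact List.isChain_singleton _
  | x :: y :: rest => by
    have ih := splitRuns_chain r (y :: rest)
    cases h : splitRuns r (y :: rest) with
    | nil => simp [splitRuns, h]; exact List.isChain_singleton _
    | cons s ss =>
      rw [h] at ih
      have hflat := splitRuns_flatten r (y :: rest)
      rw [h] at hflat
      have hne : s ≠ [] := splitRuns_ne_nil r (y :: rest) s (by rw [h]; simp)
      obtain ⟨a, t, rfl⟩ := List.exists_cons_of_ne_nil hne
      have hay : y = a := by
        simp only [List.flatten_cons, List.cons_append] at hflat
        exact ((List.cons.injEq .. ▸ hflat).1).symm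
      subst hay
      by_cases hr : r x y = true
      · simp only [splitRuns, h, if_pos hr]
        intro u hu
        simp only [List.mem_cons] at hu
        rcases hu with rfl | hu
        · exact List.IsChain.cons_cons hr (ih _ (by simp))
        · exact ih u (by simp [hu])
      · simp only [splitRuns, h, if_neg hr]
        intro u hu
        simp only [List.mem_cons] at hu
        rcases hu with rfl | rfl | hu
        · exact List.isChain_singleton _
        · exact ih _ (by simp)
        · exact ih u (by simp [hu])


theorem splitRuns_recover (l : List ℕ) :
    (((splitRuns (fun a b => decide (b < a)) l).map List.toFinset).map
      (fun s => (s.sort (· ≤ ·)).reverse)).flatten = l := by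
  rw [List.map_map]
  have : ∀ s ∈ splitRuns (fun a b => decide (b < a)) l,
      ((fun s => (Finset.sort s (· ≤ ·)).reverse) ∘ List.toFinset) s = s := by
    intro s hs
    have hc := splitRuns_chain (fun a b => decide (b < a)) l s hs
    have hchain : s.Chain' (fun a b => b < a) := by
      refine hc.imp ?_
      intro a b hab
      simpa using hab
    have hpair : s.Pairwise (fun a b => b < a) :=
      List.isChain_iff_pairwise.mp hchain
    have hsorted : s.reverse.Pairwise (· ≤ ·) := by
      rw [List.pairwise_reverse]
      exact hpair.imp le_of_lt
    have hnodup : s.reverse.Nodup := by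
      rw [List.nodup_reverse]
      exact hpair.imp ne_of_gt
    have := (List.toFinset_sort (α := ℕ) (· ≤ ·) hnodup).mpr hsorted
    simp only [Function.comp_apply]
    rw [show s.toFinset = s.reverse.toFinset by simp, this, List.reverse_reverse]
  rw [List.map_congr_left this, List.map_id', splitRuns_flatten]

theorem permWord_injective (n : ℕ) : Function.Injective (permWord n) := by
  intro σ τ h
  unfold permWord at h
  rw [List.ofFn_inj] at h
  ext i : 1
  have := congrFun h i
  simp only [add_left_inj] at this
  exact Fin.ext (by exact_mod_cast this)

/-- For every `n ≥ 1`, the map sending a permutation of `{1,…,n}` to its step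
matrix face is injective; consequently there are exactly `n!` step matrix faces. -/
theorem stepFace_injective (n : ℕ) (hn : 1 ≤ n) :
    Function.Injective (stepFace n) ∧
      ((Finset.univ : Finset (Equiv.Perm (Fin n))).image (stepFace n)).card =
        Nat.factorial n := by
  clear hn
  have hinj : Function.Injective (stepFace n) := by
    intro σ τ h
    apply permWord_injective n
    have h1 : (stepFace n σ).1 = (stepFace n τ).1 := by rw [h]
    have := congrArg
      (fun ll : List (Finset ℕ) => (ll.map (fun s => (s.sort (· ≤ ·)).reverse)).flatten) h1
    simpa only [stepFace, splitRuns_recover] using this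
  refine ⟨hinj, ?_⟩
  rw [Finset.card_image_of_injective _ hinj, Finset.card_univ, Fintype.card_perm,
    Fintype.card_fin]
end

section
/- The Saneblidze–Umble diagonal term set Δ_4 has exactly 50 elements. -/

instance admissibleDec : ∀ π μ j M, Decidable (Admissible π μ j M) := fun π μ j M =>
  @decidable_of_iff _
    (j + 1 < π.length ∧ M.Nonempty ∧ M ⊂ π.getD j ∅ ∧
      (∀ x ∈ M, ∀ y ∈ π.getD (j + 1) ∅, y < x) ∧
      ∃ k₀ < μ.length,
        (∃ m ∈ M, (∀ x ∈ M, m ≤ x) ∧ m ∈ μ.getD k₀ ∅) ∧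
        ∀ i < μ.length, k₀ ≤ i → π.getD (j + 1) ∅ ∩ μ.getD i ∅ = ∅)
    (by
      unfold Admissible
      constructor <;>
        (rintro ⟨h1, h2, h3, h4, k, hk, h5, h6⟩
         exact ⟨h1, h2, h3, h4, k, hk, h5, fun i hi hi' => h6 i hi' hi⟩)) (by infer_instance)

def rightSet (f : Face) (j : ℕ) : Finset Face :=
  ((f.1.getD j ∅).powerset.filter fun M => Admissible f.1 f.2.reverse j M).image
    fun M => (blockShift f.1 j M, f.2)

def downSet (f : Face) (j : ℕ) : Finset Face :=
  ((f.2.reverse.getD j ∅).powerset.filter fun M => Admissible f.2.reverse f.1 j M).image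
    fun M => (f.1, (blockShift f.2.reverse j M).reverse)

def seqSet (stepS : Face → ℕ → Finset Face) (bnd : Face → ℕ) :
    ℕ → ℕ → Face → Finset Face
  | 0, _, f => {f}
  | fuel + 1, i, f =>
    insert f (((Finset.range (bnd f)).filter (fun j => i ≤ j)).biUnion fun j =>
      (stepS f j).biUnion fun g => seqSet stepS bnd fuel (j + 1) g)

def suDerived (f : Face) : Finset Face :=
  (seqSet rightSet (fun x => x.1.length) f.1.length 0 f).biUnion fun m =>
    seqSet downSet (fun x => x.2.length) m.2.length 0 m

def allFaces : Finset Face :=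
  Finset.univ.biUnion fun σ : Equiv.Perm (Fin 4) => suDerived (stepFace 4 σ)

theorem blockShift_length (π : List (Finset ℕ)) (j : ℕ) (M : Finset ℕ) :
    (blockShift π j M).length = π.length := by
  simp [blockShift]

theorem mem_rightSet {f g : Face} {j : ℕ} : RightShift f g j ↔ g ∈ rightSet f j := by
  simp only [rightSet, Finset.mem_image, Finset.mem_filter, Finset.mem_powerset, RightShift]
  constructor
  · rintro ⟨M, hM, rfl⟩
    exact ⟨M, ⟨hM.2.2.1.subset, hM⟩, rfl⟩
  · rintro ⟨M, ⟨-, hM⟩, rfl⟩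
    exact ⟨M, hM, rfl⟩

theorem mem_downSet {f g : Face} {j : ℕ} : DownShift f g j ↔ g ∈ downSet f j := by
  simp only [downSet, Finset.mem_image, Finset.mem_filter, Finset.mem_powerset, DownShift]
  constructor
  · rintro ⟨M, hM, rfl⟩
    exact ⟨M, ⟨hM.2.2.1.subset, hM⟩, rfl⟩
  · rintro ⟨M, ⟨-, hM⟩, rfl⟩
    exact ⟨M, hM, rfl⟩

theorem rightShift_bnd {f g : Face} {j : ℕ} (h : RightShift f g j) :
    j < f.1.length ∧ g.1.length = f.1.length := by
  obtain ⟨M, hM, rfl⟩ := h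
  exact ⟨Nat.lt_of_succ_lt hM.1, blockShift_length _ _ _⟩

theorem downShift_bnd {f g : Face} {j : ℕ} (h : DownShift f g j) :
    j < f.2.length ∧ g.2.length = f.2.length := by
  obtain ⟨M, hM, rfl⟩ := h
  have := hM.1
  simp only [List.length_reverse] at this ⊢
  exact ⟨Nat.lt_of_succ_lt this, by simp [blockShift_length]⟩

theorem mem_seqSet {step : Face → Face → ℕ → Prop} {stepS : Face → ℕ → Finset Face}
    {bnd : Face → ℕ}
    (hstep : ∀ f g j, step f g j ↔ g ∈ stepS f j)
    (hb : ∀ f g j, step f g j → j < bnd f ∧ bnd g = bnd f) :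
    ∀ fuel i f, bnd f ≤ fuel + i → ∀ h,
      (ShiftSeq step i f h ↔ h ∈ seqSet stepS bnd fuel i f)
  | 0, i, f, hf, h => by
    simp only [seqSet, Finset.mem_singleton]
    constructor
    · intro hsq
      cases hsq with
      | refl => rfl
      | cons i j f g h hij hs hseq =>
        have := (hb f g j hs).1
        omega
    · rintro rfl; exact .refl _ _
  | fuel + 1, i, f, hf, h => by
    simp only [seqSet, Finset.mem_insert, Finset.mem_biUnion, Finset.mem_filter,
      Finset.mem_range]
    constructor
    · intro hsq
      cases hsq with
      | refl => exact Or.inl rfl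
      | cons i j f g h hij hs hseq =>
        have h1 := (hb f g j hs).1
        have h2 := (hb f g j hs).2
        refine Or.inr ⟨j, ⟨h1, hij⟩, g, (hstep f g j).1 hs, ?_⟩
        exact (mem_seqSet hstep hb fuel (j + 1) g (by omega) h).1 hseq
    · rintro (rfl | ⟨j, ⟨hjb, hij⟩, g, hg, hh⟩)
      · exact .refl _ _
      · have hs := (hstep f g j).2 hg
        have h2 := (hb f g j hs).2
        exact .cons i j f g h hij hs
          ((mem_seqSet hstep hb fuel (j + 1) g (by omega) h).2 hh)

theorem seqR_iff (f h : Face) :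
    ShiftSeq RightShift 0 f h ↔ h ∈ seqSet rightSet (fun x => x.1.length) f.1.length 0 f :=
  mem_seqSet (step := RightShift) (stepS := rightSet) (bnd := fun x => x.1.length)
    (fun _ _ _ => mem_rightSet) (fun _ _ _ => rightShift_bnd) f.1.length 0 f
    (Nat.le_add_right _ _) h

theorem seqD_iff (f h : Face) :
    ShiftSeq DownShift 0 f h ↔ h ∈ seqSet downSet (fun x => x.2.length) f.2.length 0 f :=
  mem_seqSet (step := DownShift) (stepS := downSet) (bnd := fun x => x.2.length)
    (fun _ _ _ => mem_downSet) (fun _ _ _ => downShift_bnd) f.2.length 0 f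
    (Nat.le_add_right _ _) h

theorem mem_suDerived {f g : Face} : IsDerivedFace f g ↔ g ∈ suDerived f := by
  simp only [IsDerivedFace, suDerived, Finset.mem_biUnion]
  constructor
  · rintro ⟨m, h1, h2⟩
    exact ⟨m, (seqR_iff f m).1 h1, (seqD_iff m g).1 h2⟩
  · rintro ⟨m, h1, h2⟩
    exact ⟨m, (seqR_iff f m).2 h1, (seqD_iff m g).2 h2⟩

theorem suDiagonal_eq : SUDiagonal 4 = ↑allFaces := by
  ext f
  constructor
  · rintro ⟨σ, h⟩
    exact Finset.mem_coe.2 (Finset.mem_biUnion.2 ⟨σ, Finset.mem_univ σ, mem_suDerived.1 h⟩)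
  · intro h
    obtain ⟨σ, -, h⟩ := Finset.mem_biUnion.1 (Finset.mem_coe.1 h)
    exact ⟨σ, mem_suDerived.2 h⟩

set_option maxHeartbeats 4000000 in
/-- The Saneblidze–Umble diagonal term set Δ_4 has exactly 50 elements. -/
theorem delta_card_4 : (SUDiagonal 4).ncard = 50 := by
  rw [suDiagonal_eq, Set.ncard_coe_finset]
  decide
end
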